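/- Let F be a linearly ordered field and let M ⊆ M_n(F). Then the following are equivalent: (1) M is a monoid of matrices closed under the matrix transpose and satisfying (CD)^{(m)} = C^{(m)}D^{(m)} for all C, D ∈ M and all positive integers m; (2) M is a monoid of matrices closed under the matrix transpose in which every matrix has at most one nonzero entry in each row and at most one nonzero entry in each column. -/

import Mathlib

open Matrix Kronecker

/-- The partial determinant `det₁`: for `A ∈ M_{mn}(F) = M_m(F) ⊗ M_n(F)`,
`det1 A` is the `n × n` matrix whose `(i,j)` entry is the determinant of the
block `A_{ij} ∈ M_m(F)` given by `(A_{ij})_{kl} = A (k,i) (l,j)`. -/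
def det1 {F : Type*} [Field F] {m n : ℕ}
    (A : Matrix (Fin m × Fin n) (Fin m × Fin n) F) : Matrix (Fin n) (Fin n) F :=
  Matrix.of fun i j => Matrix.det (Matrix.of fun k l : Fin m => A (k, i) (l, j))

/-- The `m`-th Hadamard (entrywise) power of a matrix. -/
def hpow {F : Type*} [Monoid F] {n : ℕ} (B : Matrix (Fin n) (Fin n) F) (m : ℕ) :
    Matrix (Fin n) (Fin n) F :=
  Matrix.of fun i j => (B i j) ^ m

lemma aux_sq {F : Type*} [Field F] [LinearOrder F] [IsStrictOrderedRing F] {n : ℕ} (a : Fin n → F)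
    (ha : ∀ i, 0 ≤ a i) (h : (∑ i, a i) ^ 2 = ∑ i, (a i) ^ 2) :
    ∀ j j', a j ≠ 0 → a j' ≠ 0 → j = j' := by
  intro j j' hj hj'
  by_contra hne
  have hjpos : 0 < a j := lt_of_le_of_ne (ha j) (Ne.symm hj)
  have hj'pos : 0 < a j' := lt_of_le_of_ne (ha j') (Ne.symm hj')
  set S := ∑ i, a i with hS
  have hSge : a j + a j' ≤ S := by
    have hsub : ∑ i ∈ ({j, j'} : Finset (Fin n)), a i ≤ S :=
      Finset.sum_le_sum_of_subset_of_nonneg (Finset.subset_univ _) (fun i _ _ => ha i)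
    rwa [Finset.sum_pair hne] at hsub
  have hlt : ∑ i, (a i) ^ 2 < ∑ i, a i * S := by
    apply Finset.sum_lt_sum
    · intro i _
      have hle : a i ≤ S := Finset.single_le_sum (fun i _ => ha i) (Finset.mem_univ i)
      rw [pow_two]
      exact mul_le_mul_of_nonneg_left hle (ha i)
    · refine ⟨j, Finset.mem_univ j, ?_⟩
      have hjS : a j < S := lt_of_lt_of_le (by linarith) hSge
      rw [pow_two]
      exact mul_lt_mul_of_pos_left hjS hjpos
  have hS2 : S ^ 2 = ∑ i, a i * S := by
    rw [pow_two, ← Finset.sum_mul]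
  linarith

lemma aux_pow {F : Type*} [Field F] {n : ℕ} (f : Fin n → F)
    (hf : ∀ k k', f k ≠ 0 → f k' ≠ 0 → k = k') (m : ℕ) (hm : 0 < m) :
    (∑ k, f k) ^ m = ∑ k, (f k) ^ m := by
  by_cases h : ∃ k0, f k0 ≠ 0
  · obtain ⟨k0, hk0⟩ := h
    have hz : ∀ k ∈ Finset.univ, k ≠ k0 → f k = 0 := by
      intro k _ hk
      by_contra hfk
      exact hk (hf k k0 hfk hk0)
    rw [Finset.sum_eq_single_of_mem k0 (Finset.mem_univ _) hz,
        Finset.sum_eq_single_of_mem k0 (Finset.mem_univ _)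
          (fun k hk1 hk2 => by rw [hz k hk1 hk2, zero_pow hm.ne'])]
  · push_neg at h
    simp [h, zero_pow hm.ne']

/-- A transpose-closed monoid of matrices over a linearly ordered field on which
the Hadamard power distributes over matrix multiplication is exactly a
transpose-closed monoid of matrices with at most one nonzero entry in each row
and each column. -/
theorem monoid_hpow_mul_transpose_equiv {F : Type*} [Field F] [LinearOrder F] [IsStrictOrderedRing F] {n : ℕ}
    (M : Set (Matrix (Fin n) (Fin n) F)) :
    ((1 : Matrix (Fin n) (Fin n) F) ∈ M ∧ (∀ C ∈ M, ∀ D ∈ M, C * D ∈ M) ∧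
      (∀ C ∈ M, Cᵀ ∈ M) ∧
      (∀ C ∈ M, ∀ D ∈ M, ∀ m : ℕ, 0 < m → hpow (C * D) m = hpow C m * hpow D m)) ↔
    ((1 : Matrix (Fin n) (Fin n) F) ∈ M ∧ (∀ C ∈ M, ∀ D ∈ M, C * D ∈ M) ∧
      (∀ C ∈ M, Cᵀ ∈ M) ∧
      (∀ C ∈ M, (∀ i j j', C i j ≠ 0 → C i j' ≠ 0 → j = j') ∧
                (∀ i i' j, C i j ≠ 0 → C i' j ≠ 0 → i = i'))) := by
  constructor
  · rintro ⟨h1, h2, h3, h4⟩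
    have key : ∀ C ∈ M, ∀ i j j', C i j ≠ 0 → C i j' ≠ 0 → j = j' := by
      intro C hC i j j' hj hj'
      have hEq := h4 C hC Cᵀ (h3 C hC) 2 (by norm_num)
      have hEntry := congrFun (congrFun hEq i) i
      simp only [hpow, Matrix.mul_apply, Matrix.of_apply, Matrix.transpose_apply] at hEntry
      have hEntry' : (∑ k, (C i k) ^ 2) ^ 2 = ∑ k, ((C i k) ^ 2) ^ 2 := by
        convert hEntry using 2 <;> simp [pow_two, mul_pow]
      have := aux_sq (fun k => (C i k) ^ 2) (fun k => sq_nonneg _) hEntry' j j'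
        (pow_ne_zero 2 hj) (pow_ne_zero 2 hj')
      exact this
    refine ⟨h1, h2, h3, fun C hC => ⟨key C hC, fun i i' j hij hi'j => ?_⟩⟩
    exact key Cᵀ (h3 C hC) j i i' (by simpa using hij) (by simpa using hi'j)
  · rintro ⟨h1, h2, h3, h4⟩
    refine ⟨h1, h2, h3, fun C hC D hD m hm => ?_⟩
    ext i j
    simp only [hpow, Matrix.mul_apply, Matrix.of_apply]
    rw [aux_pow (fun k => C i k * D k j)
      (fun k k' hk hk' =>
        (h4 C hC).1 i k k' (left_ne_zero_of_mul hk) (left_ne_zero_of_mul hk')) m hm]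
    simp [mul_pow]
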